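/- For every V ∈ S and every n ∈ ℤ, the family of subspaces V_n^i (:= V^i for i ≤ n and := I^i_n for i > n) defines a subobject V_n of V in S; these subobjects satisfy V_n ⊆ V_{n+1} for all n ∈ ℤ and V = ∪_{n∈ℤ} V_n, and moreover for every n the inclusion V_n ↪ V_{n+1} admits a retraction in S (so V_n is a direct summand of V_{n+1}). -/

import Mathlib

open CategoryTheory CategoryTheory.Limits

/-- The category `S` of sequences of `k`-vector spaces: functors from `ℤ`
(viewed as a poset category) to `k`-vector spaces.  Explicitly, an object `V`
consists of `k`-vector spaces `V.obj i` for all `i : ℤ` together with transition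
maps `V.obj i ⟶ V.obj (i+1)` (with no condition on composites), and a morphism
is a family of linear maps commuting with the transition maps. -/
abbrev SeqCat (k : Type) [Field k] := ℤ ⥤ ModuleCat k

variable {k : Type} [Field k]

/-- The transition map `d_V^i : V^i ⟶ V^{i+1}` of a sequence `V`. -/
noncomputable def SeqCat.d (V : SeqCat k) (i : ℤ) : V.obj i ⟶ V.obj (i + 1) :=
  V.map (homOfLE (by omega))

set_option linter.unusedVariables false

/-- The component in degree `i` of the subobject `V_n ⊆ V`: it is all of `V^i` for
`i ≤ n`, and the image `I^i_n` of the composite transition map `d^{n,i} : V^n → V^i`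
for `i > n`. -/
noncomputable def genObj (V : SeqCat k) (n i : ℤ) : Submodule k (V.obj i) :=
  if h : i ≤ n then ⊤ else LinearMap.range (V.map (homOfLE (by omega : n ≤ i))).hom

lemma genObj_stable (V : SeqCat k) (n : ℤ) {i j : ℤ} (f : i ⟶ j) :
    ∀ v ∈ genObj V n i, (V.map f) v ∈ genObj V n j := by
  intro v hv
  have hij : i ≤ j := leOfHom f
  by_cases hj : j ≤ n
  · rw [genObj, dif_pos hj]
    trivial
  · rw [genObj, dif_neg hj]
    by_cases hi : i ≤ n
    · have hcomp : V.map (homOfLE (by omega : i ≤ n)) ≫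
          V.map (homOfLE (by omega : n ≤ j)) = V.map f := by
        rw [← V.map_comp]
        exact congrArg V.map (Subsingleton.elim _ f)
      exact ⟨(V.map (homOfLE (by omega : i ≤ n))) v, congrArg (fun g => g.hom v) hcomp⟩
    · rw [genObj, dif_neg hi] at hv
      obtain ⟨w, hw⟩ := hv
      have hcomp : V.map (homOfLE (by omega : n ≤ i)) ≫ V.map f =
          V.map (homOfLE (by omega : n ≤ j)) := by
        rw [← V.map_comp]
        exact congrArg V.map (Subsingleton.elim _ _)
      refine ⟨w, ?_⟩
      rw [← hw]
      exact (congrArg (fun g => g.hom w) hcomp).symm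

lemma genObj_le (V : SeqCat k) (n i : ℤ) : genObj V n i ≤ genObj V (n + 1) i := by
  intro v hv
  by_cases h1 : i ≤ n + 1
  · rw [genObj, dif_pos h1]
    trivial
  · rw [genObj, dif_neg h1]
    have hi : ¬ i ≤ n := by omega
    rw [genObj, dif_neg hi] at hv
    obtain ⟨w, hw⟩ := hv
    have hcomp : V.map (homOfLE (by omega : n ≤ n + 1)) ≫
        V.map (homOfLE (by omega : n + 1 ≤ i)) = V.map (homOfLE (by omega : n ≤ i)) := by
      rw [← V.map_comp]
      exact congrArg V.map (Subsingleton.elim _ _)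
    refine ⟨(V.map (homOfLE (by omega : n ≤ n + 1))) w, ?_⟩
    rw [← hw]
    exact congrArg (fun g => g.hom w) hcomp

/-- The subobject `V_n` of `V`, whose component in degree `i` is `V^i` for `i ≤ n` and
`I^i_n = im(d^{n,i})` for `i > n`. -/
noncomputable def genSeq (V : SeqCat k) (n : ℤ) : SeqCat k where
  obj i := ModuleCat.of k (genObj V n i)
  map {i j} f := ModuleCat.ofHom ((V.map f).hom.restrict (genObj_stable V n f))
  map_id i := by
    apply ModuleCat.hom_ext
    apply LinearMap.ext
    intro x
    apply Subtype.ext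
    show (V.map (𝟙 i)).hom x.1 = _
    rw [V.map_id]
    rfl
  map_comp {i j l} f g := by
    apply ModuleCat.hom_ext
    apply LinearMap.ext
    intro x
    apply Subtype.ext
    show (V.map (f ≫ g)).hom x.1 = (V.map g).hom ((V.map f).hom x.1)
    rw [V.map_comp]
    rfl

/-- The inclusion `V_n ⟶ V` in `S`. -/
noncomputable def genInc (V : SeqCat k) (n : ℤ) : genSeq V n ⟶ V where
  app i := ModuleCat.ofHom (genObj V n i).subtype
  naturality := by
    intro i j f
    apply ModuleCat.hom_ext
    apply LinearMap.ext
    intro x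
    rfl

/-- The inclusion `V_n ⟶ V_{n+1}` in `S`. -/
noncomputable def genStep (V : SeqCat k) (n : ℤ) : genSeq V n ⟶ genSeq V (n + 1) where
  app i := ModuleCat.ofHom (Submodule.inclusion (genObj_le V n i))
  naturality := by
    intro i j f
    apply ModuleCat.hom_ext
    apply LinearMap.ext
    intro x
    apply Subtype.ext
    rfl


section LinearAlgebraAux

variable {k : Type} [Field k] {M : Type*} [AddCommGroup M] [Module k M]

/-- Extend a partial complement of `A` inside `K` to one inside `K'`. -/
lemma ext_compl (A K K' C : Submodule k M) (hKK' : K ≤ K') (hCK : C ≤ K)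
    (hAC : A ⊓ C = ⊥) (hsup : (A ⊓ K) ⊔ C = K) :
    ∃ C', C ≤ C' ∧ C' ≤ K' ∧ A ⊓ C' = ⊥ ∧ (A ⊓ K') ⊔ C' = K' := by
  obtain ⟨D, hD⟩ := ((A ⊓ K') ⊔ C).exists_isCompl
  refine ⟨C ⊔ (D ⊓ K'), le_sup_left, sup_le (hCK.trans hKK') inf_le_right, ?_, ?_⟩
  · rw [eq_bot_iff]
    rintro a ⟨haA, haC'⟩
    obtain ⟨c, hc, d, hd, rfl⟩ := Submodule.mem_sup.1 haC'
    have hcK' : c ∈ K' := hKK' (hCK hc)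
    have hsum : c + d ∈ (A ⊓ K') ⊔ C :=
      Submodule.mem_sup.2 ⟨c + d, ⟨haA, Submodule.add_mem _ hcK' hd.2⟩, 0, Submodule.zero_mem _,
        (add_zero _)⟩
    have hd0 : d = 0 := by
      have : d ∈ ((A ⊓ K') ⊔ C) ⊓ D := by
        refine ⟨?_, hd.1⟩
        have : (c + d) - c ∈ (A ⊓ K') ⊔ C :=
          Submodule.sub_mem _ hsum (Submodule.mem_sup.2 ⟨0, Submodule.zero_mem _, c, hc, zero_add _⟩)
        simpa using this
      rw [hD.inf_eq_bot] at this
      simpa using this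
    subst hd0
    have : c + 0 ∈ A ⊓ C := ⟨haA, by simpa using hc⟩
    rw [hAC] at this
    simpa using this
  · apply le_antisymm
    · refine sup_le inf_le_right (sup_le (hCK.trans hKK') inf_le_right)
    · intro z hz
      have : z ∈ ((A ⊓ K') ⊔ C) ⊔ D := by rw [hD.sup_eq_top]; trivial
      obtain ⟨b, hb, d, hd, rfl⟩ := Submodule.mem_sup.1 this
      have hbK' : b ∈ K' := by
        refine (sup_le inf_le_right (hCK.trans hKK') : (A ⊓ K') ⊔ C ≤ K') hb
      have hdK' : d ∈ K' := by
        have : (b + d) - b ∈ K' := Submodule.sub_mem _ hz hbK'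
        simpa using this
      obtain ⟨a, ha, c, hc, rfl⟩ := Submodule.mem_sup.1 hb
      refine Submodule.mem_sup.2 ⟨a, ha, c + d, ?_, (add_assoc a c d).symm⟩
      exact Submodule.mem_sup.2 ⟨c, hc, d, ⟨hd, hdK'⟩, rfl⟩

/-- There is a linear projection onto `A` preserving every member of a chain of submodules. -/
lemma exists_proj (A : Submodule k M) (K : ℕ → Submodule k M) (hK : ∀ j, K j ≤ K (j + 1)) :
    ∃ p : M →ₗ[k] M, (∀ x, p x ∈ A) ∧ (∀ a ∈ A, p a = a) ∧ ∀ j, ∀ z ∈ K j, p z ∈ K j := by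
  obtain ⟨C0, -, hC0b, hC0c, hC0d⟩ :=
    ext_compl A ⊥ (K 0) ⊥ bot_le le_rfl (by simp) (by simp)
  have step : ∀ (j : ℕ)
      (C : {C : Submodule k M // C ≤ K j ∧ A ⊓ C = ⊥ ∧ (A ⊓ K j) ⊔ C = K j}),
      ∃ C' : {C' : Submodule k M //
        C' ≤ K (j + 1) ∧ A ⊓ C' = ⊥ ∧ (A ⊓ K (j + 1)) ⊔ C' = K (j + 1)}, C.1 ≤ C'.1 := by
    rintro j ⟨C, h1, h2, h3⟩
    obtain ⟨C', hle, ha, hb, hc⟩ := ext_compl A (K j) (K (j + 1)) C (hK j) h1 h2 h3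
    exact ⟨⟨C', ha, hb, hc⟩, hle⟩
  choose F hF using step
  let g : ∀ j : ℕ, {C : Submodule k M // C ≤ K j ∧ A ⊓ C = ⊥ ∧ (A ⊓ K j) ⊔ C = K j} :=
    fun j => Nat.rec ⟨C0, hC0b, hC0c, hC0d⟩ (fun j prev => F j prev) j
  have hgmono : Monotone fun j => (g j).1 :=
    monotone_nat_of_le_succ fun j => hF j (g j)
  set Cinf := ⨆ j, (g j).1 with hCinf
  have hACinf : A ⊓ Cinf = ⊥ := by
    rw [eq_bot_iff]
    rintro x ⟨hxA, hxC⟩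
    obtain ⟨j, hj⟩ := (Submodule.mem_iSup_of_directed _ hgmono.directed_le).1 hxC
    have : x ∈ A ⊓ (g j).1 := ⟨hxA, hj⟩
    rw [(g j).2.2.1] at this
    exact this
  obtain ⟨D, hD⟩ := (A ⊔ Cinf).exists_isCompl
  have hcompl : IsCompl A (Cinf ⊔ D) := by
    constructor
    · rw [disjoint_iff, eq_bot_iff]
      rintro a ⟨haA, haC⟩
      obtain ⟨c, hc, d, hd, rfl⟩ := Submodule.mem_sup.1 haC
      have hd0 : d = 0 := by
        have : d ∈ (A ⊔ Cinf) ⊓ D := by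
          refine ⟨?_, hd⟩
          have : (c + d) - c ∈ A ⊔ Cinf := Submodule.sub_mem _
            (Submodule.mem_sup_left haA) (Submodule.mem_sup_right hc)
          simpa using this
        rw [hD.inf_eq_bot] at this
        simpa using this
      subst hd0
      have : c + 0 ∈ A ⊓ Cinf := ⟨haA, by simpa using hc⟩
      rw [hACinf] at this
      simpa using this
    · rw [codisjoint_iff, ← sup_assoc, hD.sup_eq_top]
  refine ⟨A.subtype ∘ₗ Submodule.projectionOnto A _ hcompl, fun x => (Submodule.projectionOnto A _ hcompl x).2, ?_, ?_⟩
  · intro a ha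
    simp [Submodule.projectionOnto_apply_of_mem_left hcompl ha]
  · intro j z hz
    have hz' : z ∈ (A ⊓ K j) ⊔ (g j).1 := by rw [(g j).2.2.2]; exact hz
    obtain ⟨a, ha, c, hc, rfl⟩ := Submodule.mem_sup.1 hz'
    have hcC : c ∈ Cinf ⊔ D :=
      Submodule.mem_sup_left (Submodule.mem_iSup_of_directed _ hgmono.directed_le |>.2 ⟨j, hc⟩)
    have : (A.subtype ∘ₗ Submodule.projectionOnto A _ hcompl) (a + c) = a := by
      simp [Submodule.projectionOnto_apply_of_mem_left hcompl ha.1,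
        Submodule.projectionOnto_apply_of_mem_right hcompl hcC]
    rw [this]
    exact ha.2

end LinearAlgebraAux

section SeqAux

variable {k : Type} [Field k]

lemma SeqCat.map_map (V : SeqCat k) {a b c : ℤ} (h1 : a ≤ b) (h2 : b ≤ c) (x : V.obj a) :
    V.map (homOfLE h2) (V.map (homOfLE h1) x) = V.map (homOfLE (h1.trans h2)) x := by
  have hcomp : V.map (homOfLE h1) ≫ V.map (homOfLE h2) = V.map (homOfLE (h1.trans h2)) := by
    rw [← V.map_comp]
    exact congrArg V.map (Subsingleton.elim _ _)
  exact congrArg (fun g => g.hom x) hcomp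

lemma SeqCat.map_congr (V : SeqCat k) {a b : ℤ} (f g : a ⟶ b) (x : V.obj a) :
    V.map f x = V.map g x := by rw [Subsingleton.elim f g]

lemma genObj_le_range (V : SeqCat k) {n i : ℤ} (h : n ≤ i) :
    genObj V n i ≤ LinearMap.range (V.map (homOfLE h)).hom := by
  intro v hv
  by_cases hi : i ≤ n
  · obtain rfl : i = n := le_antisymm hi h
    exact ⟨v, by rw [Subsingleton.elim (homOfLE h) (𝟙 i), V.map_id]; rfl⟩
  · rw [genObj, dif_neg hi] at hv
    exact hv

lemma map_mem_genObj (V : SeqCat k) {n i : ℤ} (h : n ≤ i) (w : V.obj n) :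
    V.map (homOfLE h) w ∈ genObj V n i := by
  by_cases hi : i ≤ n
  · rw [genObj, dif_pos hi]; trivial
  · rw [genObj, dif_neg hi]; exact ⟨w, rfl⟩

lemma genObj_le_of_le (V : SeqCat k) {n i : ℤ} (h : i ≤ n) :
    genObj V (n + 1) i ≤ genObj V n i := by
  intro v _
  rw [genObj, dif_pos h]
  trivial

variable (V : SeqCat k) (n : ℤ) (p : V.obj (n + 1) →ₗ[k] V.obj (n + 1))

/-- The degree-`i` component (`i ≥ n+1`) of the retraction associated to a projection `p`. -/
noncomputable def retrApp
    (hp1 : ∀ x, p x ∈ LinearMap.range (V.map (homOfLE (by omega : n ≤ n + 1))).hom)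
    (hp3 : ∀ (i : ℤ) (h : n + 1 ≤ i) (z : V.obj (n + 1)),
      V.map (homOfLE h) z = 0 → V.map (homOfLE h) (p z) = 0)
    {i : ℤ} (h : n + 1 ≤ i) :
    genObj V (n + 1) i →ₗ[k] genObj V n i :=
  ((Submodule.liftQ (LinearMap.ker (V.map (homOfLE h)).hom)
      (LinearMap.codRestrict (genObj V n i) ((V.map (homOfLE h)).hom ∘ₗ p) (fun z => by
        obtain ⟨u, hu⟩ := hp1 z
        dsimp only [LinearMap.comp_apply]
        rw [← hu, SeqCat.map_map]
        exact map_mem_genObj V _ u))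
      (fun z hz => by
        rw [LinearMap.mem_ker] at hz ⊢
        exact Subtype.ext (hp3 i h z hz)))
    ∘ₗ (LinearMap.quotKerEquivRange (V.map (homOfLE h)).hom).symm.toLinearMap)
  ∘ₗ Submodule.inclusion (genObj_le_range V h)

lemma retrApp_apply
    (hp1 : ∀ x, p x ∈ LinearMap.range (V.map (homOfLE (by omega : n ≤ n + 1))).hom)
    (hp3 : ∀ (i : ℤ) (h : n + 1 ≤ i) (z : V.obj (n + 1)),
      V.map (homOfLE h) z = 0 → V.map (homOfLE h) (p z) = 0)
    {i : ℤ} (h : n + 1 ≤ i) (x : genObj V (n + 1) i)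
    (w : V.obj (n + 1)) (hw : V.map (homOfLE h) w = x.1) :
    (retrApp V n p hp1 hp3 h x : V.obj i) = V.map (homOfLE h) (p w) := by
  have e1 : (LinearMap.quotKerEquivRange (V.map (homOfLE h)).hom).symm
      (Submodule.inclusion (genObj_le_range V h) x) = Submodule.Quotient.mk w := by
    rw [LinearEquiv.symm_apply_eq]
    exact Subtype.ext hw.symm
  simp only [retrApp, LinearMap.comp_apply, LinearEquiv.coe_coe]
  rw [e1, Submodule.liftQ_apply]
  rfl

/-- All components of the retraction. -/
noncomputable def retrFull
    (hp1 : ∀ x, p x ∈ LinearMap.range (V.map (homOfLE (by omega : n ≤ n + 1))).hom)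
    (hp3 : ∀ (i : ℤ) (h : n + 1 ≤ i) (z : V.obj (n + 1)),
      V.map (homOfLE h) z = 0 → V.map (homOfLE h) (p z) = 0)
    (i : ℤ) : genObj V (n + 1) i →ₗ[k] genObj V n i :=
  if h : i ≤ n then Submodule.inclusion (genObj_le_of_le V h)
  else retrApp V n p hp1 hp3 (by omega : n + 1 ≤ i)

lemma retrFull_val_le
    (hp1 : ∀ x, p x ∈ LinearMap.range (V.map (homOfLE (by omega : n ≤ n + 1))).hom)
    (hp3 : ∀ (i : ℤ) (h : n + 1 ≤ i) (z : V.obj (n + 1)),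
      V.map (homOfLE h) z = 0 → V.map (homOfLE h) (p z) = 0)
    {i : ℤ} (hi : i ≤ n) (x : genObj V (n + 1) i) :
    (retrFull V n p hp1 hp3 i x : V.obj i) = x.1 := by
  rw [retrFull, dif_pos hi]
  rfl

lemma retrFull_val_gt
    (hp1 : ∀ x, p x ∈ LinearMap.range (V.map (homOfLE (by omega : n ≤ n + 1))).hom)
    (hp3 : ∀ (i : ℤ) (h : n + 1 ≤ i) (z : V.obj (n + 1)),
      V.map (homOfLE h) z = 0 → V.map (homOfLE h) (p z) = 0)
    {i : ℤ} (hi : ¬ i ≤ n) (x : genObj V (n + 1) i)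
    (w : V.obj (n + 1)) (hw : V.map (homOfLE (by omega : n + 1 ≤ i)) w = x.1) :
    (retrFull V n p hp1 hp3 i x : V.obj i)
      = V.map (homOfLE (by omega : n + 1 ≤ i)) (p w) := by
  rw [retrFull, dif_neg hi]
  exact retrApp_apply V n p hp1 hp3 _ x w hw

/-- The retraction `V_{n+1} ⟶ V_n` associated to a suitable projection `p`. -/
noncomputable def retr
    (hp1 : ∀ x, p x ∈ LinearMap.range (V.map (homOfLE (by omega : n ≤ n + 1))).hom)
    (hp2 : ∀ w ∈ LinearMap.range (V.map (homOfLE (by omega : n ≤ n + 1))).hom, p w = w)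
    (hp3 : ∀ (i : ℤ) (h : n + 1 ≤ i) (z : V.obj (n + 1)),
      V.map (homOfLE h) z = 0 → V.map (homOfLE h) (p z) = 0) :
    genSeq V (n + 1) ⟶ genSeq V n where
  app i := ModuleCat.ofHom (retrFull V n p hp1 hp3 i)
  naturality := by
    intro i j f
    have hij : i ≤ j := leOfHom f
    apply ModuleCat.hom_ext
    apply LinearMap.ext
    intro x
    apply Subtype.ext
    show (retrFull V n p hp1 hp3 j ((genSeq V (n + 1)).map f x)).1
        = V.map f (retrFull V n p hp1 hp3 i x).1
    by_cases hj : j ≤ n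
    · have hi : i ≤ n := hij.trans hj
      rw [retrFull_val_le V n p hp1 hp3 hj ((genSeq V (n + 1)).map f x), retrFull_val_le V n p hp1 hp3 hi x]
      rfl
    · by_cases hi : i ≤ n
      · -- w := d^{i,n+1} x.1 lies in A, and p w = w
        have hwA : V.map (homOfLE (by omega : i ≤ n + 1)) x.1
            ∈ LinearMap.range (V.map (homOfLE (by omega : n ≤ n + 1))).hom := by
          refine ⟨V.map (homOfLE (by omega : i ≤ n)) x.1, ?_⟩
          rw [SeqCat.map_map]
        have hw : V.map (homOfLE (by omega : n + 1 ≤ j))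
            (V.map (homOfLE (by omega : i ≤ n + 1)) x.1)
            = ((genSeq V (n + 1)).map f x).1 := by
          show _ = V.map f x.1
          rw [SeqCat.map_map]
          exact SeqCat.map_congr V _ _ x.1
        rw [retrFull_val_gt V n p hp1 hp3 hj _ _ hw, hp2 _ hwA, hw,
          retrFull_val_le V n p hp1 hp3 hi x]
        rfl
      · obtain ⟨w, hw⟩ := genObj_le_range V (by omega : n + 1 ≤ i) x.2
        have hw2 : V.map (homOfLE (by omega : n + 1 ≤ j)) w
            = ((genSeq V (n + 1)).map f x).1 := by
          show _ = V.map f x.1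
          rw [← hw, ← SeqCat.map_map V (by omega : n + 1 ≤ i) hij w]
          exact SeqCat.map_congr V _ _ _
        rw [retrFull_val_gt V n p hp1 hp3 hj _ _ hw2,
          retrFull_val_gt V n p hp1 hp3 hi _ _ hw,
          SeqCat.map_congr V f (homOfLE hij), SeqCat.map_map]

lemma retr_comp
    (hp1 : ∀ x, p x ∈ LinearMap.range (V.map (homOfLE (by omega : n ≤ n + 1))).hom)
    (hp2 : ∀ w ∈ LinearMap.range (V.map (homOfLE (by omega : n ≤ n + 1))).hom, p w = w)
    (hp3 : ∀ (i : ℤ) (h : n + 1 ≤ i) (z : V.obj (n + 1)),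
      V.map (homOfLE h) z = 0 → V.map (homOfLE h) (p z) = 0) :
    genStep V n ≫ retr V n p hp1 hp2 hp3 = 𝟙 (genSeq V n) := by
  apply NatTrans.ext
  funext i
  apply ModuleCat.hom_ext
  apply LinearMap.ext
  intro x
  apply Subtype.ext
  show (retrFull V n p hp1 hp3 i ((genStep V n).app i x)).1 = x.1
  by_cases hi : i ≤ n
  · rw [retrFull_val_le V n p hp1 hp3 hi ((genStep V n).app i x)]
    rfl
  · obtain ⟨u, hu⟩ := genObj_le_range V (by omega : n ≤ i) x.2
    have hwA : V.map (homOfLE (by omega : n ≤ n + 1)) u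
        ∈ LinearMap.range (V.map (homOfLE (by omega : n ≤ n + 1))).hom := ⟨u, rfl⟩
    have hw : V.map (homOfLE (by omega : n + 1 ≤ i))
        (V.map (homOfLE (by omega : n ≤ n + 1)) u) = ((genStep V n).app i x).1 := by
      show _ = x.1
      rw [SeqCat.map_map, ← hu]
    rw [retrFull_val_gt V n p hp1 hp3 hi _ _ hw, hp2 _ hwA, hw]
    rfl

end SeqAux

/-- For every `V ∈ S` and every `n ∈ ℤ`, the family of subspaces
`V_n^i := V^i` for `i ≤ n` and `:= I^i_n` for `i > n` defines a subobject `V_n` of `V`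
in `S` (the inclusion `V_n ⟶ V` is a monomorphism); these subobjects satisfy
`V_n ⊆ V_{n+1}` for all `n ∈ ℤ` and `V = ∪_{n∈ℤ} V_n`, and moreover, for every `n`, the
inclusion `V_n ↪ V_{n+1}` admits a retraction in `S` (so `V_n` is a direct summand of
`V_{n+1}`). -/
theorem gen_filtration (V : SeqCat k) :
    (∀ n : ℤ, Mono (genInc V n)) ∧
    (∀ n i : ℤ, genObj V n i ≤ genObj V (n + 1) i) ∧
    (∀ (i : ℤ) (v : V.obj i), ∃ n : ℤ, v ∈ genObj V n i) ∧
    (∀ n : ℤ, ∃ r : genSeq V (n + 1) ⟶ genSeq V n,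
      genStep V n ≫ r = 𝟙 (genSeq V n)) := by
  refine ⟨?_, fun n i => genObj_le V n i, ?_, ?_⟩
  · intro n
    have : ∀ i : ℤ, Mono ((genInc V n).app i) := fun i =>
      (ModuleCat.mono_iff_injective _).2 (Submodule.injective_subtype _)
    exact NatTrans.mono_of_mono_app _
  · intro i v
    exact ⟨i, by rw [genObj, dif_pos le_rfl]; trivial⟩
  · intro n
    obtain ⟨p, hp1, hp2, hp3⟩ := exists_proj (M := ↑(V.obj (n + 1)))
      (LinearMap.range (V.map (homOfLE (by omega : n ≤ n + 1))).hom)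
      (fun j : ℕ => LinearMap.ker (V.map (homOfLE (by omega : n + 1 ≤ n + 1 + (j : ℤ)))).hom)
      (by
        intro j z hz
        rw [LinearMap.mem_ker] at hz ⊢
        rw [← SeqCat.map_map V (by omega : n + 1 ≤ n + 1 + (j : ℤ))
          (by push_cast; omega : n + 1 + (j : ℤ) ≤ n + 1 + ((j + 1 : ℕ) : ℤ)) z, hz, map_zero])
    have hp3' : ∀ (i : ℤ) (h : n + 1 ≤ i) (z : V.obj (n + 1)),
        V.map (homOfLE h) z = 0 → V.map (homOfLE h) (p z) = 0 := by
      intro i h z hz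
      obtain ⟨j, rfl⟩ : ∃ j : ℕ, i = n + 1 + (j : ℤ) := ⟨(i - (n + 1)).toNat, by omega⟩
      exact hp3 j z hz
    exact ⟨retr V n p hp1 hp2 hp3', retr_comp V n p hp1 hp2 hp3'⟩
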